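/- For odd k ≥ 5: g(k, 5·2^{k-2}) = 5·2^{k-1} − 2 = 3·((2^k+1)/3 + 2^{k-1} − 1), and g(k, 5·2^{k-2} + 2) = 5·2^{k-1} + k − 2 > 3·((2^k+1)/3 + 2^{k-1}), where g(m, 2d) = Σ_{i=0}^{m-1} ⌈d/2^{i-1}⌉ with the i=0 term equal to 2d. -/

import Mathlib

/-- The additive Griesmer sum: `G m d` represents g(m, 2d) = Σ_{i=0}^{m-1} ⌈d/2^{i-1}⌉,
with the `i = 0` term equal to `2d`. -/
def G (m d : ℕ) : ℕ := 2 * d + ∑ i ∈ Finset.Ico 1 m, (d + 2 ^ (i - 1) - 1) / 2 ^ (i - 1)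

lemma ceil2 (a b : ℕ) (hb : 0 < b) : (2 * a + 2 * b - 1) / (2 * b) = (a + b - 1) / b := by
  rw [← Nat.div_div_eq_div_mul]
  congr 1
  omega

lemma ceil2' (a b : ℕ) (hb : 0 < b) : (2 * a + 1 + 2 * b - 1) / (2 * b) = (a + 1 + b - 1) / b := by
  rw [← Nat.div_div_eq_div_mul]
  congr 1
  omega

lemma sumA (n : ℕ) :
    ∑ j ∈ Finset.range (n + 4), (5 * 2 ^ (n + 2) + 2 ^ j - 1) / 2 ^ j
      = 5 * 2 ^ (n + 3) - 2 := by
  induction n with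
  | zero => decide
  | succ n ih =>
    have h : ∀ j : ℕ, (5 * 2 ^ (n + 3) + 2 ^ (j + 1) - 1) / 2 ^ (j + 1)
        = (5 * 2 ^ (n + 2) + 2 ^ j - 1) / 2 ^ j := by
      intro j
      have := ceil2 (5 * 2 ^ (n + 2)) (2 ^ j) (Nat.pow_pos (by norm_num))
      calc (5 * 2 ^ (n + 3) + 2 ^ (j + 1) - 1) / 2 ^ (j + 1)
          = (2 * (5 * 2 ^ (n + 2)) + 2 * 2 ^ j - 1) / (2 * 2 ^ j) := by ring_nf
        _ = (5 * 2 ^ (n + 2) + 2 ^ j - 1) / 2 ^ j := this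
    have : n + 1 + 4 = (n + 4) + 1 := by ring
    rw [this, Finset.sum_range_succ']
    simp only [h]
    rw [ih]
    have h2 : (5 * 2 ^ (n + 1 + 2) + 2 ^ 0 - 1) / 2 ^ 0 = 5 * 2 ^ (n + 3) := by
      simp
    have h3 : (1:ℕ) ≤ 2 ^ (n + 3) := Nat.one_le_two_pow
    have h4 : 5 * 2 ^ (n + 1 + 3) = 2 * (5 * 2 ^ (n + 3)) := by ring
    omega

lemma sumB (n : ℕ) :
    ∑ j ∈ Finset.range (n + 4), (5 * 2 ^ (n + 2) + 1 + 2 ^ j - 1) / 2 ^ j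
      = 5 * 2 ^ (n + 3) + n + 1 := by
  induction n with
  | zero => decide
  | succ n ih =>
    have h : ∀ j : ℕ, (5 * 2 ^ (n + 3) + 1 + 2 ^ (j + 1) - 1) / 2 ^ (j + 1)
        = (5 * 2 ^ (n + 2) + 1 + 2 ^ j - 1) / 2 ^ j := by
      intro j
      have := ceil2' (5 * 2 ^ (n + 2)) (2 ^ j) (Nat.pow_pos (by norm_num))
      calc (5 * 2 ^ (n + 3) + 1 + 2 ^ (j + 1) - 1) / 2 ^ (j + 1)
          = (2 * (5 * 2 ^ (n + 2)) + 1 + 2 * 2 ^ j - 1) / (2 * 2 ^ j) := by ring_nf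
        _ = (5 * 2 ^ (n + 2) + 1 + 2 ^ j - 1) / 2 ^ j := this
    have : n + 1 + 4 = (n + 4) + 1 := by ring
    rw [this, Finset.sum_range_succ']
    simp only [h]
    rw [ih]
    have h2 : (5 * 2 ^ (n + 1 + 2) + 1 + 2 ^ 0 - 1) / 2 ^ 0 = 5 * 2 ^ (n + 3) + 1 := by
      simp
    have h4 : 5 * 2 ^ (n + 1 + 3) = 2 * (5 * 2 ^ (n + 3)) := by ring
    omega

theorem stmt17 (k : ℕ) (hk : 5 ≤ k) (hodd : Odd k) :
    G k (5 * 2 ^ (k - 3)) = 5 * 2 ^ (k - 1) - 2 ∧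
    5 * 2 ^ (k - 1) - 2 = 3 * ((2 ^ k + 1) / 3 + 2 ^ (k - 1) - 1) ∧
    G k (5 * 2 ^ (k - 3) + 1) = 5 * 2 ^ (k - 1) + k - 2 ∧
    3 * ((2 ^ k + 1) / 3 + 2 ^ (k - 1)) < 5 * 2 ^ (k - 1) + k - 2 := by
  -- divisibility: 3 ∣ 2 ^ k + 1
  have hdvd : 3 ∣ 2 ^ k + 1 := by
    obtain ⟨m, hm⟩ := hodd
    have h4 : 4 ^ m % 3 = 1 := by
      rw [Nat.pow_mod]; simp
    have : 2 ^ k = 2 * 4 ^ m := by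
      subst hm
      rw [pow_succ, pow_mul]
      ring
    omega
  obtain ⟨n, rfl⟩ : ∃ n, k = n + 5 := ⟨k - 5, by omega⟩
  have h3 : n + 5 - 3 = n + 2 := by omega
  have h1 : n + 5 - 1 = n + 4 := by omega
  have hGsum : ∀ d : ℕ, G (n + 5) d
      = 2 * d + ∑ j ∈ Finset.range (n + 4), (d + 2 ^ j - 1) / 2 ^ j := by
    intro d
    unfold G
    congr 1
    rw [Finset.sum_Ico_eq_sum_range]
    simp
  have hA := sumA n
  have hB := sumB n
  have e1 : G (n + 5) (5 * 2 ^ (n + 5 - 3)) = 5 * 2 ^ (n + 5 - 1) - 2 := by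
    rw [h3, h1, hGsum, hA]
    have h4 : 5 * 2 ^ (n + 3) = 2 * (5 * 2 ^ (n + 2)) := by ring
    have h5 : 5 * 2 ^ (n + 4) = 4 * (5 * 2 ^ (n + 2)) := by ring
    have h6 : (1:ℕ) ≤ 2 ^ (n + 2) := Nat.one_le_two_pow
    omega
  have e3 : G (n + 5) (5 * 2 ^ (n + 5 - 3) + 1) = 5 * 2 ^ (n + 5 - 1) + (n + 5) - 2 := by
    rw [h3, h1, hGsum, hB]
    have h4 : 5 * 2 ^ (n + 3) = 2 * (5 * 2 ^ (n + 2)) := by ring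
    have h5 : 5 * 2 ^ (n + 4) = 4 * (5 * 2 ^ (n + 2)) := by ring
    omega
  obtain ⟨q, hq⟩ := hdvd
  have hq' : (2 ^ (n + 5) + 1) / 3 = q := by omega
  rw [hq', h1]
  have h5 : 2 ^ (n + 5) = 2 * 2 ^ (n + 4) := by ring
  have h6 : (1:ℕ) ≤ 2 ^ (n + 4) := Nat.one_le_two_pow
  refine ⟨e1, by omega, e3, by omega⟩
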